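/- Suppose P is an n×n irreducible strictly substochastic matrix (irreducible, substochastic, and at least one row sum < 1), α = 0, and μ > 0. Then the only nonnegative solution of λ = (λ ∧ μ)P is λ = 0. -/
import Mathlib


/-- for an irreducible strictly substochastic matrix `P` and
`α = 0`, the only nonnegative solution of `λ = (λ ∧ μ) P` is `λ = 0`. -/
theorem irreducible_strictly_substochastic_zero_solution (n : ℕ)
    (μ : Fin n → ℝ) (P : Matrix (Fin n) (Fin n) ℝ)
    (hμ : ∀ i, 0 < μ i)
    (hP : ∀ i j, 0 ≤ P i j) (hPsub : ∀ i, ∑ j, P i j ≤ 1)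
    (hstrict : ∃ i, ∑ j, P i j < 1)
    (hirr : ∀ i j : Fin n, i = j ∨
      ((∃ k ≥ 1, 0 < (P ^ k) i j) ∧ (∃ l ≥ 1, 0 < (P ^ l) j i)))
    (lam : Fin n → ℝ) (hlam : ∀ i, 0 ≤ lam i)
    (heq : ∀ i, lam i = ∑ j, min (lam j) (μ j) * P j i) :
    lam = 0 := by
  set m : Fin n → ℝ := fun j => min (lam j) (μ j) with hm
  have hm0 : ∀ j, 0 ≤ m j := fun j => le_min (hlam j) (hμ j).le
  have hml : ∀ j, m j ≤ lam j := fun j => min_le_left _ _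
  have hmzero : ∀ j, m j = 0 → lam j = 0 := by
    intro j h
    by_contra hne
    have h1 : 0 < lam j := lt_of_le_of_ne (hlam j) (Ne.symm hne)
    have h2 : 0 < m j := lt_min h1 (hμ j)
    linarith
  obtain ⟨i0, hi0⟩ := hstrict
  -- the total mass argument: λ_{i0} = 0
  have hsum : ∑ j, m j * ∑ i, P j i = ∑ j, lam j := by
    calc ∑ j, m j * ∑ i, P j i = ∑ j, ∑ i, m j * P j i := by
          simp_rw [Finset.mul_sum]
      _ = ∑ i, ∑ j, m j * P j i := Finset.sum_comm
      _ = ∑ j, lam j := by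
          refine Finset.sum_congr rfl fun i _ => ?_
          rw [heq i]
  have hle : ∀ j ∈ Finset.univ, m j * ∑ i, P j i ≤ lam j := by
    intro j _
    calc m j * ∑ i, P j i ≤ m j := mul_le_of_le_one_right (hm0 j) (hPsub j)
      _ ≤ lam j := hml j
  have heach : ∀ j ∈ Finset.univ, m j * ∑ i, P j i = lam j :=
    (Finset.sum_eq_sum_iff_of_le hle).mp hsum
  have hlami0 : lam i0 = 0 := by
    have h1 := heach i0 (Finset.mem_univ _)
    have h2 := hml i0
    have hr : 0 ≤ ∑ i, P i0 i := Finset.sum_nonneg fun i _ => hP i0 i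
    have hmi0 : m i0 = 0 := by nlinarith [hm0 i0]
    exact hmzero i0 hmi0
  -- propagate zero backwards along positive entries of P^k
  have key : ∀ k : ℕ, ∀ j, 0 < (P ^ k) j i0 → lam j = 0 := by
    intro k
    induction k with
    | zero =>
      intro j h
      rw [pow_zero, Matrix.one_apply] at h
      by_cases hji : j = i0
      · exact hji ▸ hlami0
      · simp [hji] at h
    | succ k ih =>
      intro j h
      rw [pow_succ', Matrix.mul_apply] at h
      have h' : ∑ l : Fin n, (0 : ℝ) < ∑ l, P j l * (P ^ k) l i0 := by simpa using h
      obtain ⟨l, _, hl⟩ := Finset.exists_lt_of_sum_lt h'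
      have hPjl : 0 < P j l := by
        rcases mul_pos_iff.mp hl with ⟨h1, _⟩ | ⟨h1, _⟩
        · exact h1
        · linarith [hP j l]
      have hPk : 0 < (P ^ k) l i0 := by
        rcases mul_pos_iff.mp hl with ⟨_, h2⟩ | ⟨h1, _⟩
        · exact h2
        · linarith [hP j l]
      have hlaml := ih l hPk
      have hz : ∀ s ∈ Finset.univ, m s * P s l = 0 := by
        refine (Finset.sum_eq_zero_iff_of_nonneg
          (fun s _ => mul_nonneg (hm0 s) (hP s l))).mp ?_
        rw [← heq l, hlaml]
      have hmj : m j = 0 :=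
        (mul_eq_zero.mp (hz j (Finset.mem_univ _))).resolve_right (ne_of_gt hPjl)
      exact hmzero j hmj
  funext i
  show lam i = 0
  rcases hirr i i0 with h | ⟨⟨k, _, hk⟩, _⟩
  · exact h ▸ hlami0
  · exact key k i hk
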